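/- For 0 < λ < 27/4, the unique real root z₀ of (z₀-1)³ = λ z₀ satisfies z₀ > 1. For λ > 27/4, the cubic (z₀-1)³ = λ z₀ has three distinct real roots, exactly one of which is greater than 1 and the other two are strictly negative. -/
import Mathlib

private lemma pos_root_unique (lam a b : ℝ) (ha : 1 < a) (hb : 1 < b)
    (hea : (a - 1) ^ 3 = lam * a) (heb : (b - 1) ^ 3 = lam * b) : a = b := by
  have hcross : (a - 1) ^ 3 * b = (b - 1) ^ 3 * a := by
    rw [hea, heb]; ring
  have key : (a - b) * (a * b * (a + b) - 3 * (a * b) + 1) = 0 := by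
    linear_combination hcross
  have hx : (0:ℝ) < a - 1 := by linarith
  have hy : (0:ℝ) < b - 1 := by linarith
  have hpos : 0 < a * b * (a + b) - 3 * (a * b) + 1 := by
    nlinarith [sq_nonneg (a - b), mul_pos hx hy, mul_pos (mul_pos hx hy) (by linarith : (0:ℝ) < a - 1 + (b - 1))]
  rcases mul_eq_zero.1 key with h | h
  · linarith
  · linarith

private lemma t_small_unique (lam a b : ℝ) (ha0 : 0 < a) (ha : a < 1/2) (hb0 : 0 < b) (hb : b < 1/2)
    (hea : (a + 1) ^ 3 = lam * a) (heb : (b + 1) ^ 3 = lam * b) : a = b := by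
  have hcross : (a + 1) ^ 3 * b = (b + 1) ^ 3 * a := by rw [hea, heb]; ring
  have key : (b - a) * (1 - a * b * (a + b) - 3 * (a * b)) = 0 := by
    linear_combination hcross
  have hpos : 0 < 1 - a * b * (a + b) - 3 * (a * b) := by
    nlinarith [mul_pos ha0 hb0]
  rcases mul_eq_zero.1 key with h | h
  · linarith
  · linarith

private lemma t_large_unique (lam a b : ℝ) (ha : 1/2 < a) (hb : 1/2 < b)
    (hea : (a + 1) ^ 3 = lam * a) (heb : (b + 1) ^ 3 = lam * b) : a = b := by
  have hcross : (a + 1) ^ 3 * b = (b + 1) ^ 3 * a := by rw [hea, heb]; ring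
  have key : (b - a) * (1 - a * b * (a + b) - 3 * (a * b)) = 0 := by
    linear_combination hcross
  have hneg : 1 - a * b * (a + b) - 3 * (a * b) < 0 := by
    nlinarith [mul_pos (by linarith : (0:ℝ) < a) (by linarith : (0:ℝ) < b)]
  rcases mul_eq_zero.1 key with h | h
  · linarith
  · linarith

private lemma no_root_mid (lam z : ℝ) (hlam : 0 < lam) (h0 : 0 ≤ z) (h1 : z ≤ 1)
    (he : (z - 1) ^ 3 = lam * z) : False := by
  rcases eq_or_lt_of_le h0 with h | h
  · rw [← h] at he; norm_num at he
  · have h2 : 0 < lam * z := mul_pos hlam h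
    nlinarith [mul_nonneg (sq_nonneg (z - 1)) (by linarith : (0:ℝ) ≤ 1 - z)]

private lemma pos_root_exists (lam : ℝ) (hlam : 0 < lam) :
    ∃ z : ℝ, 1 < z ∧ (z - 1) ^ 3 = lam * z := by
  set f : ℝ → ℝ := fun z => (z - 1) ^ 3 - lam * z with hf
  have hcont : ContinuousOn f (Set.Icc 1 (lam + 2)) := by fun_prop
  have h1 : f 1 < 0 := by simp [hf]; nlinarith
  have h2 : 0 < f (lam + 2) := by
    simp only [hf]
    nlinarith [mul_pos (mul_pos hlam hlam) hlam, mul_pos hlam hlam]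
  have hle : (1:ℝ) ≤ lam + 2 := by linarith
  have := intermediate_value_Ioo hle hcont (a := 1) (b := lam + 2)
  obtain ⟨z, hz, hfz⟩ := this ⟨h1, h2⟩
  exact ⟨z, hz.1, by have : (z - 1) ^ 3 - lam * z = 0 := hfz; linarith⟩

private lemma neg_t_roots (lam : ℝ) (hlam : 27 / 4 < lam) :
    (∃ t : ℝ, 0 < t ∧ t < 1/2 ∧ (t + 1) ^ 3 = lam * t) ∧
    (∃ t : ℝ, 1/2 < t ∧ (t + 1) ^ 3 = lam * t) := by
  set g : ℝ → ℝ := fun t => (t + 1) ^ 3 - lam * t with hg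
  have hg0 : (0:ℝ) < g 0 := by simp [hg]
  have hghalf : g (1/2) < 0 := by simp [hg]; nlinarith
  have hglam : 0 < g lam := by simp [hg]; nlinarith
  constructor
  · have hcont : ContinuousOn g (Set.Icc 0 (1/2)) := by fun_prop
    obtain ⟨t, ht, hgt⟩ := intermediate_value_Ioo' (by norm_num : (0:ℝ) ≤ 1/2) hcont ⟨hghalf, hg0⟩
    exact ⟨t, ht.1, ht.2, by have : (t + 1) ^ 3 - lam * t = 0 := hgt; linarith⟩
  · have hcont : ContinuousOn g (Set.Icc (1/2) lam) := by fun_prop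
    obtain ⟨t, ht, hgt⟩ := intermediate_value_Ioo (by linarith : (1:ℝ)/2 ≤ lam) hcont ⟨hghalf, hglam⟩
    exact ⟨t, ht.1, by have : (t + 1) ^ 3 - lam * t = 0 := hgt; linarith⟩

private lemma no_neg_root_small (lam z : ℝ) (hlam : 0 < lam) (hlam2 : lam < 27/4)
    (hz : z < 0) (he : (z - 1) ^ 3 = lam * z) : False := by
  -- (z-1)^3 - (27/4) z = -(z+1/2)^2 (4-z)
  nlinarith [sq_nonneg (z + 1/2), mul_nonneg (sq_nonneg (z + 1/2)) (by linarith : (0:ℝ) ≤ 4 - z),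
    mul_pos (by linarith : (0:ℝ) < 27/4 - lam) (by linarith : (0:ℝ) < -z)]

theorem cubic_roots_location (lam : ℝ) (hlam : 0 < lam) :
    (lam < 27 / 4 →
      (∃! z : ℝ, (z - 1) ^ 3 = lam * z) ∧ ∀ z : ℝ, (z - 1) ^ 3 = lam * z → 1 < z) ∧
    (27 / 4 < lam →
      ∃ z₁ z₂ z₃ : ℝ, z₁ ≠ z₂ ∧ z₁ ≠ z₃ ∧ z₂ ≠ z₃ ∧
        (z₁ - 1) ^ 3 = lam * z₁ ∧ (z₂ - 1) ^ 3 = lam * z₂ ∧ (z₃ - 1) ^ 3 = lam * z₃ ∧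
        1 < z₁ ∧ z₂ < 0 ∧ z₃ < 0 ∧
        ∀ z : ℝ, (z - 1) ^ 3 = lam * z → (z = z₁ ∨ z = z₂ ∨ z = z₃)) := by
  obtain ⟨z₁, hz₁gt, hz₁eq⟩ := pos_root_exists lam hlam
  constructor
  · intro hlt
    have hgt : ∀ z : ℝ, (z - 1) ^ 3 = lam * z → 1 < z := by
      intro z hz
      rcases lt_or_ge z 0 with h | h
      · exact absurd (no_neg_root_small lam z hlam hlt h hz) (by simp)
      · by_contra hle
        exact no_root_mid lam z hlam h (not_lt.1 hle) hz
    refine ⟨⟨z₁, hz₁eq, fun z hz => pos_root_unique lam z z₁ (hgt z hz) hz₁gt hz hz₁eq⟩, hgt⟩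
  · intro hgt
    obtain ⟨⟨t₂, ht₂0, ht₂half, ht₂eq⟩, ⟨t₃, ht₃half, ht₃eq⟩⟩ := neg_t_roots lam hgt
    have ht₃0 : (0:ℝ) < t₃ := by linarith
    refine ⟨z₁, -t₂, -t₃, by intro h; linarith, by intro h; linarith,
      by intro h; linarith,
      hz₁eq, by linear_combination -ht₂eq, by linear_combination -ht₃eq,
      hz₁gt, by linarith, by linarith, ?_⟩
    intro z hz
    rcases lt_or_ge z 0 with h | h
    · -- negative root: t = -z satisfies (t+1)^3 = lam * t
      have hteq : (-z + 1) ^ 3 = lam * (-z) := by linear_combination -hz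
      have ht0 : (0:ℝ) < -z := by linarith
      have hne : -z ≠ 1/2 := by
        intro habs
        rw [habs] at hteq
        norm_num at hteq
        linarith
      rcases lt_or_gt_of_ne hne with hcase | hcase
      · right; left
        have := t_small_unique lam (-z) t₂ ht0 hcase ht₂0 ht₂half hteq ht₂eq
        linarith
      · right; right
        have := t_large_unique lam (-z) t₃ hcase ht₃half hteq ht₃eq
        linarith
    · rcases le_or_gt z 1 with h1 | h1
      · exact absurd (no_root_mid lam z hlam h h1 hz) (by simp)
      · exact Or.inl (pos_root_unique lam z z₁ h1 hz₁gt hz hz₁eq)
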